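/- Let V be a finite-dimensional inner product space, let {P'_k}_{k=1}^m be orthogonal projections onto mutually orthogonal subspaces whose direct sum is V, and let {P_k}_{k=1}^m be orthogonal projections on V such that the operator norm ‖P'_k − P_k‖ ≤ γ for all k, where γ ∈ (0,1]. Then for every v ∈ V, (1 − √m·γ)·‖v‖ ≤ sqrt(∑_{k=1}^m ‖P_k v‖²) ≤ (1 + √m·γ)·‖v‖. -/

import Mathlib

open scoped InnerProductSpace

theorem stmt0 {V : Type*} [NormedAddCommGroup V] [InnerProductSpace ℝ V]
    [FiniteDimensional ℝ V] {m : ℕ} (γ : ℝ) (hγ0 : 0 < γ) (hγ1 : γ ≤ 1)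
    (P' P : Fin m → V →L[ℝ] V)
    (hP'proj : ∀ k, IsSelfAdjoint (P' k) ∧ P' k ∘L P' k = P' k)
    (hPproj : ∀ k, IsSelfAdjoint (P k) ∧ P k ∘L P k = P k)
    (hdecomp : ∀ v : V, ∑ k, ‖P' k v‖ ^ 2 = ‖v‖ ^ 2)
    (hclose : ∀ k, ‖P' k - P k‖ ≤ γ) :
    ∀ v : V,
      (1 - Real.sqrt m * γ) * ‖v‖ ≤ Real.sqrt (∑ k, ‖P k v‖ ^ 2) ∧
      Real.sqrt (∑ k, ‖P k v‖ ^ 2) ≤ (1 + Real.sqrt m * γ) * ‖v‖ := by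
  intro v
  set x : PiLp 2 (fun _ : Fin m => V) := WithLp.toLp 2 (fun k => P k v) with hxdef
  set y : PiLp 2 (fun _ : Fin m => V) := WithLp.toLp 2 (fun k => P' k v) with hydef
  have hx2 : ‖x‖ ^ 2 = ∑ k, ‖P k v‖ ^ 2 := PiLp.norm_sq_eq_of_L2 _ x
  have hy2 : ‖y‖ ^ 2 = ‖v‖ ^ 2 := by
    rw [PiLp.norm_sq_eq_of_L2]; exact hdecomp v
  have hy : ‖y‖ = ‖v‖ := by
    nlinarith [norm_nonneg y, norm_nonneg v]
  have hsq : Real.sqrt (∑ k, ‖P k v‖ ^ 2) = ‖x‖ := by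
    rw [← hx2, Real.sqrt_sq (norm_nonneg x)]
  have hcomp : ∀ k, ‖P k v - P' k v‖ ≤ γ * ‖v‖ := by
    intro k
    have h1 : ‖(P' k - P k) v‖ ≤ ‖P' k - P k‖ * ‖v‖ :=
      (P' k - P k).le_opNorm v
    have h2 : ‖P k v - P' k v‖ = ‖(P' k - P k) v‖ := by
      rw [ContinuousLinearMap.sub_apply, norm_sub_rev]
    rw [h2]
    exact h1.trans (mul_le_mul_of_nonneg_right (hclose k) (norm_nonneg v))
  have hxy2 : ‖x - y‖ ^ 2 ≤ m * (γ * ‖v‖) ^ 2 := by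
    rw [PiLp.norm_sq_eq_of_L2]
    calc ∑ k, ‖(x - y) k‖ ^ 2 ≤ ∑ _k : Fin m, (γ * ‖v‖) ^ 2 := by
          apply Finset.sum_le_sum
          intro k _
          have h := hcomp k
          have hnn : (0:ℝ) ≤ ‖(x - y) k‖ := norm_nonneg _
          have : (x - y) k = P k v - P' k v := rfl
          rw [this]
          nlinarith [norm_nonneg (P k v - P' k v)]
      _ = m * (γ * ‖v‖) ^ 2 := by simp [Finset.sum_const, nsmul_eq_mul]
  have hxy : ‖x - y‖ ≤ Real.sqrt m * γ * ‖v‖ := by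
    have h1 : ‖x - y‖ ≤ Real.sqrt (m * (γ * ‖v‖) ^ 2) := by
      rw [← Real.sqrt_sq (norm_nonneg (x - y))]
      exact Real.sqrt_le_sqrt hxy2
    have h2 : Real.sqrt (m * (γ * ‖v‖) ^ 2) = Real.sqrt m * (γ * ‖v‖) := by
      rw [Real.sqrt_mul (Nat.cast_nonneg m), Real.sqrt_sq (by positivity)]
    linarith [h1, h2.le, h2.ge]
  have htri := abs_norm_sub_norm_le x y
  rw [hsq]
  rw [abs_le] at htri
  constructor
  · nlinarith [htri.1, htri.2]
  · nlinarith [htri.1, htri.2]
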